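/- Let K, L > 0 and 0 ≤ v < 1, and define f(ω) = arctanh( K v / (L ω) ) for |ω| > K v / L. Then for every integer m ≥ 0 and every real ω with |ω| ≥ √2·K/L, |f^{(m)}(ω)| ≤ (6L/K)^m · m!. -/

import Mathlib

open Real

noncomputable def arctanh (x : ℝ) : ℝ := (1 / 2) * Real.log ((1 + x) / (1 - x))

private lemma ne_facts {c y : ℝ} (hc : 0 ≤ c) (hy : c < |y|) :
    y ≠ 0 ∧ y + c ≠ 0 ∧ y - c ≠ 0 := by
  rcases lt_abs.mp hy with h | h
  · exact ⟨by linarith, by linarith, by linarith⟩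
  · refine ⟨by linarith, by linarith, by linarith⟩

private lemma arctanh_eq {c y : ℝ} (hc : 0 ≤ c) (hy : c < |y|) :
    arctanh (c / y) = 1 / 2 * (Real.log (y + c) - Real.log (y - c)) := by
  obtain ⟨hy0, hpc, hmc⟩ := ne_facts hc hy
  have h2 : (1 : ℝ) - c / y ≠ 0 := by
    have : 1 - c / y = (y - c) / y := by field_simp
    rw [this]; exact div_ne_zero hmc hy0
  have key : (1 + c / y) / (1 - c / y) = (y + c) / (y - c) := by
    field_simp
  unfold arctanh
  rw [key, Real.log_div hpc hmc]

private lemma iter_formula (c : ℝ) (hc : 0 ≤ c) (m : ℕ) :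
    ∀ x : ℝ, c < |x| →
      iteratedDeriv (m + 1) (fun y : ℝ => arctanh (c / y)) x
        = (-1 : ℝ) ^ m * (m.factorial : ℝ) / 2 *
            (((x + c) ^ (m + 1))⁻¹ - ((x - c) ^ (m + 1))⁻¹) := by
  have hS : IsOpen {y : ℝ | c < |y|} := isOpen_lt continuous_const continuous_abs
  induction m with
  | zero =>
    intro x hx
    obtain ⟨hx0, hpc, hmc⟩ := ne_facts hc hx
    rw [iteratedDeriv_one]
    have heq : (fun y : ℝ => arctanh (c / y)) =ᶠ[nhds x]
        (fun y : ℝ => 1 / 2 * (Real.log (y + c) - Real.log (y - c))) := by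
      filter_upwards [hS.mem_nhds hx] with y hy
      exact arctanh_eq hc hy
    rw [heq.deriv_eq]
    have h1 : HasDerivAt (fun y : ℝ => Real.log (y + c)) (x + c)⁻¹ x := by
      simpa using ((hasDerivAt_id x).add_const c).log hpc
    have h2 : HasDerivAt (fun y : ℝ => Real.log (y - c)) (x - c)⁻¹ x := by
      simpa using ((hasDerivAt_id x).sub_const c).log hmc
    rw [(show HasDerivAt (fun y : ℝ => 1 / 2 * (Real.log (y + c) - Real.log (y - c))) _ x from (h1.sub h2).const_mul (1 / 2 : ℝ)).deriv]
    simp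
  | succ n ih =>
    intro x hx
    obtain ⟨hx0, hpc, hmc⟩ := ne_facts hc hx
    rw [iteratedDeriv_succ]
    have heq : iteratedDeriv (n + 1) (fun y : ℝ => arctanh (c / y)) =ᶠ[nhds x]
        (fun y : ℝ => (-1 : ℝ) ^ n * (n.factorial : ℝ) / 2 *
          (((y + c) ^ (n + 1))⁻¹ - ((y - c) ^ (n + 1))⁻¹)) := by
      filter_upwards [hS.mem_nhds hx] with y hy
      exact ih y hy
    rw [heq.deriv_eq]
    have h1 : HasDerivAt (fun y : ℝ => ((y + c) ^ (n + 1))⁻¹)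
        (-(((n : ℝ) + 1) * (x + c) ^ n) / ((x + c) ^ (n + 1)) ^ 2) x := by
      have := (((hasDerivAt_id x).add_const c).pow (n + 1)).inv
        (pow_ne_zero _ hpc)
      simp at this; exact this
    have h2 : HasDerivAt (fun y : ℝ => ((y - c) ^ (n + 1))⁻¹)
        (-(((n : ℝ) + 1) * (x - c) ^ n) / ((x - c) ^ (n + 1)) ^ 2) x := by
      have := (((hasDerivAt_id x).sub_const c).pow (n + 1)).inv
        (pow_ne_zero _ hmc)
      simp at this; exact this
    rw [(show HasDerivAt (fun y : ℝ => (-1 : ℝ) ^ n * (n.factorial : ℝ) / 2 *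
          (((y + c) ^ (n + 1))⁻¹ - ((y - c) ^ (n + 1))⁻¹)) _ x from (h1.sub h2).const_mul ((-1 : ℝ) ^ n * (n.factorial : ℝ) / 2)).deriv]
    push_cast [Nat.factorial_succ]
    field_simp
    ring

theorem arctanh_derivative_bounds
    (K L v : ℝ) (hK : 0 < K) (hL : 0 < L) (hv0 : 0 ≤ v) (hv1 : v < 1)
    (m : ℕ) (ω : ℝ) (hω : Real.sqrt 2 * K / L ≤ |ω|) :
    |iteratedDeriv m (fun ω : ℝ => arctanh (K * v / (L * ω))) ω| ≤
      (6 * L / K) ^ m * (m.factorial : ℝ) := by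
  set c := K * v / L with hcdef
  have hc0 : 0 ≤ c := by positivity
  have hs2 : Real.sqrt 2 ^ 2 = 2 := Real.sq_sqrt (by norm_num)
  have hsnn : 0 ≤ Real.sqrt 2 := Real.sqrt_nonneg 2
  have hs43 : (4 : ℝ) / 3 ≤ Real.sqrt 2 := by nlinarith
  have hd : 0 < K / L := div_pos hK hL
  have hsd : (0 : ℝ) ≤ (Real.sqrt 2 - 4 / 3) * (K / L) :=
    mul_nonneg (by linarith) hd.le
  have hωd : Real.sqrt 2 * (K / L) ≤ |ω| := by rw [← mul_div_assoc]; exact hω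
  have hcK : c < K / L := by
    rw [hcdef, div_lt_div_iff₀ hL hL]
    nlinarith [mul_pos hK hL]
  have hcx : c < |ω| := by nlinarith
  obtain ⟨hw0, hpc, hmc⟩ := ne_facts hc0 hcx
  have hfun : (fun ω : ℝ => arctanh (K * v / (L * ω))) =
      fun y : ℝ => arctanh (c / y) := by
    funext y
    rw [hcdef, div_div]
  rw [hfun]
  cases m with
  | zero =>
    simp only [iteratedDeriv_zero, pow_zero, Nat.factorial_zero, Nat.cast_one,
      one_mul]
    have hwpos : 0 < |ω| := lt_of_le_of_lt hc0 hcx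
    have ht : |c / ω| ≤ 3 / 4 := by
      rw [abs_div, abs_of_nonneg hc0, div_le_iff₀ hwpos]
      nlinarith [div_pos hK hL]
    set t := c / ω with htdef
    obtain ⟨htl, htu⟩ := abs_le.mp ht
    have h1t : (0 : ℝ) < 1 - t := by linarith
    have h1t' : (0 : ℝ) < 1 + t := by linarith
    have hr : 0 < (1 + t) / (1 - t) := div_pos h1t' h1t
    have hup : (1 + t) / (1 - t) ≤ 7 := by
      rw [div_le_iff₀ h1t]; linarith
    have hlo : 1 / 7 ≤ (1 + t) / (1 - t) := by
      rw [le_div_iff₀ h1t]; linarith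
    have hexp2 : (7 : ℝ) ≤ Real.exp 2 := by
      have h : Real.exp 2 = Real.exp 1 * Real.exp 1 := by
        rw [← Real.exp_add]; norm_num
      nlinarith [Real.exp_one_gt_d9]
    have hexpneg : Real.exp (-2) ≤ 1 / 7 := by
      have e : Real.exp (-2) * Real.exp 2 = 1 := by
        rw [← Real.exp_add]; norm_num
      nlinarith [Real.exp_pos (-2)]
    have hlog_up : Real.log ((1 + t) / (1 - t)) ≤ 2 :=
      (Real.log_le_iff_le_exp hr).mpr (by linarith)
    have hlog_lo : -2 ≤ Real.log ((1 + t) / (1 - t)) :=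
      (Real.le_log_iff_exp_le hr).mpr (by linarith)
    unfold arctanh
    rw [abs_mul]
    have : |Real.log ((1 + t) / (1 - t))| ≤ 2 := abs_le.mpr ⟨hlog_lo, hlog_up⟩
    calc |(1 : ℝ) / 2| * |Real.log ((1 + t) / (1 - t))|
        ≤ 1 / 2 * 2 := by
          rw [abs_of_nonneg (by norm_num : (0:ℝ) ≤ 1/2)]
          gcongr
      _ = 1 := by norm_num
  | succ n =>
    rw [iter_formula c hc0 n ω hcx]
    have hKL3 : 0 < K / (3 * L) := by positivity
    have habs : ∀ a : ℝ, a = ω + c ∨ a = ω - c → K / (3 * L) ≤ |a| := by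
      rintro a (rfl | rfl)
      · have h1 : |ω| ≤ |ω + c| + c := by
          calc |ω| = |(ω + c) + (-c)| := by ring_nf
            _ ≤ |ω + c| + |(-c)| := abs_add_le _ _
            _ = |ω + c| + c := by rw [abs_neg, abs_of_nonneg hc0]
        have e3 : K / (3 * L) = K / L / 3 := by rw [div_div, mul_comm]
        rw [e3]
        nlinarith
      · have h1 : |ω| ≤ |ω - c| + c := by
          calc |ω| = |(ω - c) + c| := by ring_nf
            _ ≤ |ω - c| + |c| := abs_add_le _ _
            _ = |ω - c| + c := by rw [abs_of_nonneg hc0]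
        have e3 : K / (3 * L) = K / L / 3 := by rw [div_div, mul_comm]
        rw [e3]
        nlinarith
    have key : ∀ a : ℝ, a ≠ 0 → K / (3 * L) ≤ |a| →
        |((a) ^ (n + 1))⁻¹| ≤ (3 * L / K) ^ (n + 1) := by
      intro a ha hKa
      rw [abs_inv, abs_pow]
      have h1 : (|a| ^ (n + 1))⁻¹ ≤ ((K / (3 * L)) ^ (n + 1))⁻¹ := by
        apply inv_anti₀ (by positivity)
        exact pow_le_pow_left₀ (le_of_lt hKL3) hKa _
      calc (|a| ^ (n + 1))⁻¹ ≤ ((K / (3 * L)) ^ (n + 1))⁻¹ := h1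
        _ = (3 * L / K) ^ (n + 1) := by
            rw [← inv_pow, inv_div]
    have hA := key _ hpc (habs _ (Or.inl rfl))
    have hB := key _ hmc (habs _ (Or.inr rfl))
    have hfactpos : (0 : ℝ) ≤ (n.factorial : ℝ) := Nat.cast_nonneg _
    calc |(-1 : ℝ) ^ n * (n.factorial : ℝ) / 2 *
            (((ω + c) ^ (n + 1))⁻¹ - ((ω - c) ^ (n + 1))⁻¹)|
        = (n.factorial : ℝ) / 2 *
            |((ω + c) ^ (n + 1))⁻¹ - ((ω - c) ^ (n + 1))⁻¹| := by
          rw [abs_mul, abs_div, abs_mul, abs_pow, abs_neg, abs_one, one_pow,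
            one_mul, abs_of_nonneg hfactpos]
          norm_num
      _ ≤ (n.factorial : ℝ) / 2 *
            (|((ω + c) ^ (n + 1))⁻¹| + |((ω - c) ^ (n + 1))⁻¹|) := by
          gcongr
          exact abs_sub _ _
      _ ≤ (n.factorial : ℝ) / 2 * ((3 * L / K) ^ (n + 1) + (3 * L / K) ^ (n + 1)) := by
          gcongr
      _ = (n.factorial : ℝ) * (3 * L / K) ^ (n + 1) := by ring
      _ ≤ ((n + 1).factorial : ℝ) * (6 * L / K) ^ (n + 1) := by
          apply mul_le_mul
          · exact_mod_cast Nat.cast_le.mpr (Nat.factorial_le (Nat.le_succ n))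
          · apply pow_le_pow_left₀ (by positivity)
            rw [div_le_div_iff₀ hK hK]
            nlinarith
          · positivity
          · positivity
      _ = (6 * L / K) ^ (n + 1) * ((n + 1).factorial : ℝ) := by ring
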